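/- Let A ⊆ X be bounded and ε ≥ 0. If for every sequence (x_n) in A the intersection over k of the sets (closed convex hull of {x_n : n ≥ k}) + ε·B_X is nonempty, then A is 2ε-weakly relatively compact. -/

import Mathlib

noncomputable section
open Filter Topology Set NormedSpace Pointwise

variable {X : Type*} [NormedAddCommGroup X] [NormedSpace ℝ X] [CompleteSpace X]

/-- `B` is a boundary for `X`: a subset of the dual unit sphere on which every
element of `X` attains its norm. -/
def IsBoundary (B : Set (StrongDual ℝ X)) : Prop :=
  (∀ f ∈ B, ‖f‖ = 1) ∧ ∀ x : X, ∃ f ∈ B, f x = ‖x‖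

/-- The closure of `S` in the topology `σ_B` of pointwise convergence on `B`. -/
def sigmaClosure (B : Set (StrongDual ℝ X)) (S : Set X) : Set X :=
  {x | ∀ ε > (0 : ℝ), ∀ F : Finset (StrongDual ℝ X), (F : Set (StrongDual ℝ X)) ⊆ B →
    ∃ y ∈ S, ∀ f ∈ F, |f x - f y| < ε}

/-- The weak*-closure of a set of functionals (pointwise convergence on the predual). -/
def weakStarClosure {Y : Type*} [NormedAddCommGroup Y] [NormedSpace ℝ Y]
    (S : Set (StrongDual ℝ Y)) : Set (StrongDual ℝ Y) :=
  {φ | ∀ ε > (0 : ℝ), ∀ F : Finset Y, ∃ ψ ∈ S, ∀ y ∈ F, |φ y - ψ y| < ε}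

/-- `A` is `δ`-weakly relatively compact: every element of the weak*-closure of
`A` in the bidual is within distance `δ` of `X`. -/
def EpsWRC (A : Set X) (δ : ℝ) : Prop :=
  ∀ φ ∈ weakStarClosure ((inclusionInDoubleDual ℝ X) '' A),
    Metric.infDist φ (Set.range (inclusionInDoubleDual ℝ X)) ≤ δ

set_option linter.unusedSectionVars false
set_option linter.unusedVariables false
set_option maxHeartbeats 1000000

lemma my_exists_seq {α : Type*} (p : ∀ n : ℕ, (Fin n → α) → α → Prop)
    (h : ∀ n (f : Fin n → α), ∃ a, p n f a) :
    ∃ g : ℕ → α, ∀ n, p n (fun i => g i) (g n) := by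
  let g : ℕ → α := fun n =>
    Nat.strongRec (motive := fun _ => α) (fun n ih => (h n (fun i => ih i i.2)).choose) n
  refine ⟨g, fun n => ?_⟩
  have hgn : g n = (h n (fun i : Fin n => g i)).choose := by
    show Nat.strongRec (motive := fun _ => α) _ n = _
    rw [Nat.strongRec_eq]
  rw [hgn]
  exact (h n _).choose_spec

/-- An element of the bidual vanishing on the annihilator of finitely many points
is represented by a point of the space. -/
lemma my_repr_of_vanishing {n : ℕ} (x : Fin n → X) (Φ : StrongDual ℝ (StrongDual ℝ X))
    (hΦ : ∀ f : StrongDual ℝ X, (∀ i, f (x i) = 0) → Φ f = 0) :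
    ∃ y : X, ∀ f : StrongDual ℝ X, Φ f = f y := by
  set Y := Submodule.span ℝ (Set.range x) with hY
  have : FiniteDimensional ℝ Y := FiniteDimensional.span_of_finite ℝ (Set.finite_range x)
  let b := Module.finBasis ℝ Y
  have hg : ∀ j, ∃ g : StrongDual ℝ X, ∀ v : Y, g v = b.coord j v := by
    intro j
    obtain ⟨g, hg, -⟩ :=
      exists_extension_norm_eq Y (LinearMap.toContinuousLinearMap (b.coord j))
    exact ⟨g, fun v => by simpa using hg v⟩
  choose g hgc using hg
  refine ⟨∑ j, Φ (g j) • ((b j : Y) : X), fun f => ?_⟩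
  have key : ∀ i, (f - ∑ j, f ((b j : Y) : X) • g j) (x i) = 0 := by
    intro i
    have hx : x i ∈ Y := Submodule.subset_span ⟨i, rfl⟩
    have hcalc : (∑ j, f ((b j : Y) : X) • g j) (x i) = f (x i) := by
      have h1 : (∑ j, f ((b j : Y) : X) • g j) (x i)
          = ∑ j, f ((b j : Y) : X) * b.coord j ⟨x i, hx⟩ := by
        rw [ContinuousLinearMap.sum_apply]
        refine Finset.sum_congr rfl fun j _ => ?_
        rw [ContinuousLinearMap.smul_apply, smul_eq_mul]
        congr 1
        exact hgc j ⟨x i, hx⟩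
      rw [h1]
      have h2 : ∑ j, f ((b j : Y) : X) * b.coord j ⟨x i, hx⟩
          = f (∑ j, b.coord j ⟨x i, hx⟩ • ((b j : Y) : X)) := by
        rw [map_sum]
        refine Finset.sum_congr rfl fun j _ => ?_
        rw [map_smul, smul_eq_mul, mul_comm]
      rw [h2]
      congr 1
      have h3 := b.sum_repr ⟨x i, hx⟩
      have h4 := congrArg (Subtype.val : Y → X) h3
      simp only [Module.Basis.coord_apply]
      simpa only [Submodule.coe_sum, Submodule.coe_smul] using h4
    rw [ContinuousLinearMap.sub_apply, hcalc, sub_self]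
  have hvanish : Φ (f - ∑ j, f ((b j : Y) : X) • g j) = 0 := hΦ _ key
  have hΦf : Φ f = ∑ j, f ((b j : Y) : X) * Φ (g j) := by
    have := hvanish
    rw [map_sub, map_sum, sub_eq_zero] at this
    rw [this]
    refine Finset.sum_congr rfl fun j _ => ?_
    rw [map_smul, smul_eq_mul]
  rw [hΦf, map_sum]
  refine Finset.sum_congr rfl fun j _ => ?_
  rw [map_smul, smul_eq_mul, mul_comm]

lemma my_exists_small_functional (n : ℕ) (x : ℕ → X) (φ : StrongDual ℝ (StrongDual ℝ X)) (d δ : ℝ)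
    (hδ : 0 < δ) (hd : ∀ y : X, d ≤ ‖φ - inclusionInDoubleDual ℝ X y‖) :
    ∃ f : StrongDual ℝ X, ‖f‖ ≤ 1 ∧ (∀ i < n, f (x i) = 0) ∧ d - δ < φ f := by
  by_contra hc
  push_neg at hc
  have h0 : (0:ℝ) ≤ d - δ := by simpa using hc 0 (by simp) (by simp)
  let K : Submodule ℝ (StrongDual ℝ X) :=
    { carrier := {f | ∀ i < n, f (x i) = 0}
      add_mem' := fun hf hg i hi => by
        simp only [Set.mem_setOf_eq] at *
        simp [hf i hi, hg i hi]
      zero_mem' := fun i hi => rfl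
      smul_mem' := fun c f hf i hi => by
        simp only [Set.mem_setOf_eq] at *
        simp [hf i hi] }
  have hbound : ∀ f ∈ K, |φ f| ≤ (d - δ) * ‖f‖ := by
    intro f hf
    rcases eq_or_ne f 0 with rfl | hfne
    · simp
    · have hn : 0 < ‖f‖ := norm_pos_iff.2 hfne
      have hmem : ∀ c : ℝ, (c • f) ∈ K := fun c i hi => by
        simp only [ContinuousLinearMap.smul_apply, hf i hi, smul_zero]
      have hnorm1 : ‖(‖f‖⁻¹ • f)‖ ≤ 1 := by
        rw [norm_smul, norm_inv, norm_norm]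
        exact le_of_eq (inv_mul_cancel₀ hn.ne')
      have h1 : φ (‖f‖⁻¹ • f) ≤ d - δ := hc _ hnorm1 (hmem _)
      have h2 : φ (-(‖f‖⁻¹ • f)) ≤ d - δ := by
        have : -(‖f‖⁻¹ • f) = (-‖f‖⁻¹) • f := (neg_smul _ _).symm
        rw [this]
        exact hc _ (by rw [norm_smul, norm_neg]; rw [norm_smul] at hnorm1; simpa using hnorm1) (hmem _)
      rw [map_neg] at h2
      have habs : |φ (‖f‖⁻¹ • f)| ≤ d - δ := abs_le.2 ⟨by linarith, h1⟩
      rw [map_smul, smul_eq_mul, abs_mul, abs_inv, abs_norm] at habs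
      calc |φ f| = ‖f‖ * (‖f‖⁻¹ * |φ f|) := by field_simp
        _ ≤ ‖f‖ * (d - δ) := by
            exact mul_le_mul_of_nonneg_left habs hn.le
        _ = (d - δ) * ‖f‖ := mul_comm _ _
  letI : Norm (K →L[ℝ] ℝ) := @ContinuousLinearMap.hasOpNorm ℝ ℝ K ℝ _ _ _ _ (Submodule.normedSpace K) _ _
  let ψ : K →L[ℝ] ℝ := φ.comp K.subtypeL
  have hψ : ‖ψ‖ ≤ d - δ :=
    ContinuousLinearMap.opNorm_le_bound _ h0 (fun f => by
      simpa [ψ] using hbound f f.2)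
  obtain ⟨g, hgext, hgnorm⟩ := exists_extension_norm_eq K ψ
  have hΦ : ∀ f : StrongDual ℝ X, (∀ i : Fin n, f ((x ∘ Fin.val) i) = 0) → (φ - g) f = 0 := by
    intro f hf
    have hfK : f ∈ K := fun i hi => hf ⟨i, hi⟩
    have := hgext ⟨f, hfK⟩
    simp only [ContinuousLinearMap.sub_apply]
    rw [this]
    simp [ψ]
  obtain ⟨y, hy⟩ := my_repr_of_vanishing (x ∘ Fin.val) (φ - g) hΦ
  have heq : φ - inclusionInDoubleDual ℝ X y = g := by
    ext f
    have := hy f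
    simp only [ContinuousLinearMap.sub_apply] at this ⊢
    rw [dual_def]
    linarith
  have := hd y
  rw [heq, hgnorm] at this
  linarith

theorem hull_plus_ball_imp_epsWRC (A : Set X) (hA : Bornology.IsBounded A)
    (ε : ℝ) (hε : 0 ≤ ε)
    (h : ∀ x : ℕ → X, (∀ n, x n ∈ A) →
      (⋂ k : ℕ, (closure (convexHull ℝ {y : X | ∃ n ≥ k, y = x n})
        + ε • Metric.closedBall (0 : X) 1)).Nonempty) :
    EpsWRC A (2 * ε) := by
  classical
  intro φ hφ
  by_contra hcon
  push_neg at hcon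
  set j := inclusionInDoubleDual ℝ X with hj
  set D := Metric.infDist φ (Set.range j) with hD
  have hDd : ∀ y : X, D ≤ ‖φ - j y‖ := fun y => by
    rw [← dist_eq_norm]
    exact Metric.infDist_le_dist_of_mem (Set.mem_range_self y)
  set δ := (D - 2 * ε) / 4 with hδdef
  have hδ : 0 < δ := by
    apply div_pos _ (by norm_num)
    linarith
  simp only [weakStarClosure, Set.mem_setOf_eq] at hφ
  have hφ' : ∀ F : Finset (StrongDual ℝ X), ∃ a ∈ A, ∀ f ∈ F, |φ f - f a| < δ := by
    intro F
    obtain ⟨ψ, ⟨a, ha, rfl⟩, hψ⟩ := hφ δ hδ F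
    exact ⟨a, ha, fun f hf => by simpa [hj, dual_def] using hψ f hf⟩
  -- the inductive step
  have step : ∀ (m : ℕ) (prev : Fin m → X × StrongDual ℝ X), ∃ a : X × StrongDual ℝ X,
      (‖a.2‖ ≤ 1 ∧ (∀ i, a.2 ((prev i).1) = 0) ∧ D - δ < φ a.2) ∧
      a.1 ∈ A ∧ (∀ i, |φ ((prev i).2) - ((prev i).2) a.1| < δ) ∧ |φ a.2 - a.2 a.1| < δ := by
    intro m prev
    obtain ⟨f, hf1, hf2, hf3⟩ := my_exists_small_functional m
      (fun i => if h : i < m then (prev ⟨i, h⟩).1 else 0) φ D δ hδ hDd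
    obtain ⟨a, ha, haf⟩ := hφ'
      (insert f ((Finset.univ : Finset (Fin m)).image fun i => (prev i).2))
    refine ⟨(a, f), ⟨hf1, fun i => ?_, hf3⟩, ha, fun i => ?_, ?_⟩
    · have := hf2 i i.2
      simpa using this
    · exact haf _ (Finset.mem_insert_of_mem (Finset.mem_image_of_mem _ (Finset.mem_univ i)))
    · exact haf f (Finset.mem_insert_self _ _)
  obtain ⟨g, hg⟩ := my_exists_seq _ step
  set x : ℕ → X := fun n => (g n).1 with hx
  set f : ℕ → StrongDual ℝ X := fun n => (g n).2 with hf
  have hxA : ∀ n, x n ∈ A := fun n => (hg n).2.1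
  have hnorm : ∀ n, ‖f n‖ ≤ 1 := fun n => (hg n).1.1
  have hzero : ∀ i n, i < n → f n (x i) = 0 := fun i n hi => (hg n).1.2.1 ⟨i, hi⟩
  have hbig : ∀ n, D - δ < φ (f n) := fun n => (hg n).1.2.2
  have happrox : ∀ i n, i ≤ n → |φ (f i) - f i (x n)| < δ := by
    intro i n hin
    rcases lt_or_eq_of_le hin with hlt | rfl
    · exact (hg n).2.2.1 ⟨i, hlt⟩
    · exact (hg i).2.2.2
  obtain ⟨z, hz⟩ := h x hxA
  have hzk : ∀ k : ℕ, z ∈ closure (convexHull ℝ {y : X | ∃ n ≥ k, y = x n})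
      + ε • Metric.closedBall (0 : X) 1 := fun k => Set.mem_iInter.1 hz k
  have hwnorm : ∀ w ∈ ε • Metric.closedBall (0 : X) 1, ‖w‖ ≤ ε := by
    rintro w ⟨u, hu, rfl⟩
    rw [Metric.mem_closedBall, dist_zero_right] at hu
    rw [norm_smul, Real.norm_eq_abs, abs_of_nonneg hε]
    calc ε * ‖u‖ ≤ ε * 1 := mul_le_mul_of_nonneg_left hu hε
      _ = ε := mul_one ε
  -- lower bound
  have hlow : ∀ i, D - 2 * δ - ε ≤ f i z := by
    intro i
    obtain ⟨c, hc, w, hw, rfl⟩ := hzk i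
    have hwn : ‖w‖ ≤ ε := hwnorm w hw
    have hset : {y : X | ∃ n ≥ i, y = x n} ⊆ {y : X | D - 2 * δ ≤ f i y} := by
      rintro y ⟨n, hn, rfl⟩
      have h1 := abs_lt.1 (happrox i n hn)
      have h2 := hbig i
      simp only [Set.mem_setOf_eq]
      linarith [h1.2]
    have hconv : Convex ℝ {y : X | D - 2 * δ ≤ f i y} := by
      intro a ha b hb s t hs ht hst
      simp only [Set.mem_setOf_eq] at *
      rw [map_add, map_smul, map_smul, smul_eq_mul, smul_eq_mul]
      nlinarith
    have hclosed : IsClosed {y : X | D - 2 * δ ≤ f i y} :=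
      isClosed_le continuous_const (f i).continuous
    have hcmem : D - 2 * δ ≤ f i c :=
      (closure_minimal (convexHull_min hset hconv) hclosed) hc
    have hiw : |f i w| ≤ ε := by
      calc |f i w| ≤ ‖f i‖ * ‖w‖ := (f i).le_opNorm w
        _ ≤ 1 * ε := by
            apply mul_le_mul (hnorm i) hwn (norm_nonneg w) zero_le_one
        _ = ε := one_mul ε
    have := abs_le.1 hiw
    rw [map_add]
    linarith [this.1]
  -- upper bound
  obtain ⟨c, hc, w, hw, hsum⟩ := hzk 0
  have hwn : ‖w‖ ≤ ε := hwnorm w hw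
  obtain ⟨c', hc', hdist⟩ := Metric.mem_closure_iff.1 hc δ hδ
  rw [convexHull_eq] at hc'
  obtain ⟨ι, t, wt, zt, hw0, hw1, hzs, hcm⟩ := hc'
  have hcm' : ∑ i ∈ t, wt i • zt i = c' := by
    rw [← hcm, Finset.centerMass_eq_of_sum_1 _ _ hw1]
  -- choose indices
  have hidx : ∀ i ∈ t, ∃ m : ℕ, zt i = x m := by
    intro i hi
    obtain ⟨m, _, hm⟩ := hzs i hi
    exact ⟨m, hm⟩
  set nn : ι → ℕ := fun i => if hi : ∃ m : ℕ, zt i = x m then hi.choose else 0 with hnn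
  have hnn' : ∀ i ∈ t, zt i = x (nn i) := by
    intro i hi
    have hex := hidx i hi
    simp only [hnn, dif_pos hex]
    exact hex.choose_spec
  set N := (t.sup nn) + 1 with hN
  have hNi : ∀ i ∈ t, nn i < N := fun i hi =>
    Nat.lt_succ_of_le (Finset.le_sup hi)
  have hfNc' : f N c' = 0 := by
    rw [← hcm', map_sum]
    refine Finset.sum_eq_zero fun i hi => ?_
    rw [map_smul, hnn' i hi, hzero _ _ (hNi i hi), smul_zero]
  have hup : f N z ≤ δ + ε := by
    have h1 : |f N (c - c')| ≤ δ := by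
      calc |f N (c - c')| ≤ ‖f N‖ * ‖c - c'‖ := (f N).le_opNorm _
        _ ≤ 1 * δ := by
            apply mul_le_mul (hnorm N) _ (norm_nonneg _) zero_le_one
            rw [← dist_eq_norm]
            exact le_of_lt hdist
        _ = δ := one_mul δ
    have h2 : |f N w| ≤ ε := by
      calc |f N w| ≤ ‖f N‖ * ‖w‖ := (f N).le_opNorm _
        _ ≤ 1 * ε := mul_le_mul (hnorm N) hwn (norm_nonneg _) zero_le_one
        _ = ε := one_mul ε
    have hzeq : f N z = f N c' + f N (c - c') + f N w := by
      rw [← hsum, map_add, map_sub]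
      ring
    rw [hzeq, hfNc']
    have := abs_le.1 h1
    have := abs_le.1 h2
    linarith [(abs_le.1 h1).2, (abs_le.1 h2).2]
  have := hlow N
  linarith
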